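/- Let (X, d, μ) be a metric measure space with μ doubling and satisfying the annular decay property. Let 1 < p < ∞ and let f ∈ L^1_loc(X) be non-negative and satisfy the reverse Hölder inequality (⨍_B f^p dμ)^{1/p} ≤ c ⨍_B f dμ for all balls B. Then the measure ν(U) = ∫_U f dμ induced by f is doubling: there is a constant c' depending only on c (and the annular decay constants) such that ∫_{2B} f dμ ≤ c' ∫_B f dμ for all balls B of X. -/

import Mathlib

open MeasureTheory Metric
open scoped NNReal ENNReal


lemma holder_subset {X : Type*} [MeasurableSpace X] (μ : Measure X)
    {p q : ℝ} (hpq : p.HolderConjugate q) {f : X → ℝ} (hf0 : ∀ x, 0 ≤ f x)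
    {E : Set X} (hEfin : μ E ≠ ⊤)
    (hfE : IntegrableOn f E μ) (hfpE : IntegrableOn (fun y => f y ^ p) E μ) :
    ∫ y in E, f y ∂μ ≤ (∫ y in E, f y ^ p ∂μ) ^ (1/p) * (μ E).toReal ^ (1/q) := by
  haveI : IsFiniteMeasure (μ.restrict E) :=
    ⟨by rw [Measure.restrict_apply_univ]; exact hEfin.lt_top⟩
  have h1 : (ENNReal.ofReal p) ≠ 0 := by
    simp [ENNReal.ofReal_eq_zero, not_le, hpq.pos]
  have h2 : (ENNReal.ofReal p) ≠ ⊤ := ENNReal.ofReal_ne_top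
  have hmem : MemLp f (ENNReal.ofReal p) (μ.restrict E) := by
    rw [← memLp_norm_rpow_iff hfE.1 h1 h2, ENNReal.div_self h1 h2,
      ENNReal.toReal_ofReal hpq.nonneg, memLp_one_iff_integrable]
    refine hfpE.congr (Filter.Eventually.of_forall fun y => ?_)
    simp only [Real.norm_of_nonneg (hf0 y)]
  have hmem1 : MemLp (fun _ : X => (1:ℝ)) (ENNReal.ofReal q) (μ.restrict E) :=
    memLp_const 1
  have := integral_mul_le_Lp_mul_Lq_of_nonneg (μ := μ.restrict E) hpq
    (Filter.Eventually.of_forall hf0) (Filter.Eventually.of_forall fun _ => zero_le_one)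
    hmem hmem1
  simpa [Real.one_rpow, Measure.restrict_apply_univ, Measure.real] using this

lemma delta_choice {α c_a c'' q : ℝ} (hα : 0 < α) (hca : 1 ≤ c_a) (hc : 1 ≤ c'')
    (hq : 0 < q) :
    ∃ δ : ℝ, 0 < δ ∧ δ < 1 ∧ c'' * (c_a * δ ^ α) ^ (1/q) ≤ 1/2 := by
  have hca1 : (1:ℝ) ≤ c_a ^ (1/q) := by
    calc (1:ℝ) = 1 ^ (1/q) := (Real.one_rpow _).symm
    _ ≤ c_a ^ (1/q) := Real.rpow_le_rpow zero_le_one hca (by positivity)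
  set b : ℝ := 2 * c'' * c_a ^ (1/q) with hbdef
  have hb1 : 1 < b := by nlinarith
  have hb0 : 0 < b := by linarith
  refine ⟨b ^ (-(q/α)), Real.rpow_pos_of_pos hb0 _,
    Real.rpow_lt_one_of_one_lt_of_neg hb1 (by simp only [neg_neg, Left.neg_neg_iff]; positivity), ?_⟩
  have h1 : (b ^ (-(q/α))) ^ α = b ^ (-q) := by
    rw [← Real.rpow_mul hb0.le]
    congr 1
    field_simp
  rw [h1]
  have h2 : (c_a * b ^ (-q)) ^ (1/q) = c_a ^ (1/q) * b⁻¹ := by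
    rw [Real.mul_rpow (by linarith) (Real.rpow_nonneg hb0.le _), ← Real.rpow_mul hb0.le]
    congr 1
    rw [show -q * (1/q) = -1 by field_simp, Real.rpow_neg_one]
  rw [h2]
  rw [hbdef]
  have hc0 : c'' ≠ 0 := by linarith
  have hca0 : c_a ^ (1/q) ≠ 0 := by positivity
  have h3 : c'' * (c_a ^ (1/q) * (2 * c'' * c_a ^ (1/q))⁻¹) = 1/2 := by
    field_simp
  exact h3.le


/-- `μ` is a doubling measure with doubling constant `c_d`. -/
def IsDoublingMeasure {X : Type*} [MetricSpace X] [MeasurableSpace X]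
    (μ : Measure X) (c_d : ℝ≥0) : Prop :=
  ∀ (x : X) (r : ℝ), 0 < r → μ (ball x (2 * r)) ≤ (c_d : ℝ≥0∞) * μ (ball x r)

/-- `(X, d, μ)` satisfies the `α`-annular decay property with constant `c_a`. -/
def AnnularDecay {X : Type*} [MetricSpace X] [MeasurableSpace X]
    (μ : Measure X) (α c_a : ℝ) : Prop :=
  ∀ (x : X) (r δ : ℝ), 0 < r → 0 < δ → δ < 1 →
    μ (ball x r \ ball x ((1 - δ) * r)) ≤ ENNReal.ofReal (c_a * δ ^ α) * μ (ball x r)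

/-- `f` satisfies the reverse Hölder inequality with exponent `p` and constant `c`. -/
def ReverseHolder {X : Type*} [MetricSpace X] [MeasurableSpace X]
    (μ : Measure X) (p c : ℝ) (f : X → ℝ) : Prop :=
  ∀ (x : X) (r : ℝ), 0 < r →
    IntegrableOn (fun y => f y ^ p) (ball x r) μ ∧
    (⨍ y in ball x r, f y ^ p ∂μ) ^ (1 / p) ≤ c * ⨍ y in ball x r, f y ∂μ

/-- **Proposition 3.7.** In a doubling metric measure space with the annular decay property,
a non-negative `f ∈ L^1_loc` satisfying the reverse Hölder inequality induces a doubling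
measure: `∫_{2B} f dμ ≤ c' ∫_B f dμ` for all balls `B`, with `c'` depending only on the
reverse Hölder constant (and the annular decay constants). -/
theorem induced_measure_doubling {X : Type*} [MetricSpace X] [MeasurableSpace X]
    [BorelSpace X] (μ : Measure X)
    (hopen : ∀ U : Set X, IsOpen U → U.Nonempty → 0 < μ U)
    (hbdd : ∀ s : Set X, Bornology.IsBounded s → μ s < ⊤)
    (c_d : ℝ≥0) (hdb : IsDoublingMeasure μ c_d)
    (α c_a : ℝ) (hα : 0 < α) (hα1 : α ≤ 1) (hca : 1 ≤ c_a)
    (had : AnnularDecay μ α c_a)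
    (p c : ℝ) (hp : 1 < p) :
    ∃ c' : ℝ, 0 < c' ∧
      ∀ f : X → ℝ, (∀ x, 0 ≤ f x) →
        (∀ (x : X) (r : ℝ), 0 < r → IntegrableOn f (ball x r) μ) →
        ReverseHolder μ p c f →
        ∀ (x : X) (r : ℝ), 0 < r →
          ∫ y in ball x (2 * r), f y ∂μ ≤ c' * ∫ y in ball x r, f y ∂μ := by
  set q : ℝ := p / (p - 1) with hqdef
  have hp0 : (0:ℝ) < p := by linarith
  have hp1 : (0:ℝ) < p - 1 := by linarith
  have hpq : p.HolderConjugate q := Real.holderConjugate_iff.mpr ⟨hp, by rw [hqdef]; field_simp; ring⟩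
  have hq0 : 0 < q := div_pos hp0 hp1
  set c'' : ℝ := max c 1 with hc''def
  have hc'' : (1:ℝ) ≤ c'' := le_max_right _ _
  obtain ⟨δ, hδ0, hδ1, hkey⟩ := delta_choice hα hca hc'' hq0
  have h1δ0 : (0:ℝ) < 1 - δ := by linarith
  obtain ⟨N, hN⟩ := exists_pow_lt_of_lt_one (show (0:ℝ) < 1/2 by norm_num)
    (show 1 - δ < 1 by linarith)
  refine ⟨2^N, by positivity, fun f hf0 hfInt hRH x r hr => ?_⟩
  -- the key step: going from a ball to a slightly smaller one loses at most a factor 2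
  have step : ∀ s : ℝ, 0 < s →
      ∫ y in ball x s, f y ∂μ ≤ 2 * ∫ y in ball x ((1-δ)*s), f y ∂μ := by
    intro s hs
    have hB'B : ball x ((1-δ)*s) ⊆ ball x s := ball_subset_ball (by nlinarith)
    have hμB : μ (ball x s) ≠ ⊤ := (hbdd _ isBounded_ball).ne
    have hMpos : 0 < (μ (ball x s)).toReal :=
      ENNReal.toReal_pos (hopen _ isOpen_ball ⟨x, mem_ball_self hs⟩).ne' hμB
    set M := (μ (ball x s)).toReal with hM
    set I := ∫ y in ball x s, f y ∂μ with hI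
    set A := ⨍ y in ball x s, f y ^ p ∂μ with hA
    have hIf : IntegrableOn f (ball x s) μ := hfInt x s hs
    have hIfp : IntegrableOn (fun y => f y ^ p) (ball x s) μ := (hRH x s hs).1
    set E := ball x s \ ball x ((1-δ)*s) with hE
    have hIE : ∫ y in E, f y ∂μ = I - ∫ y in ball x ((1-δ)*s), f y ∂μ :=
      integral_diff measurableSet_ball hIf hB'B
    have hEfin : μ E ≠ ⊤ := ((measure_mono Set.diff_subset).trans_lt hμB.lt_top).ne
    have hfE : IntegrableOn f E μ := hIf.mono_set Set.diff_subset
    have hfpE : IntegrableOn (fun y => f y ^ p) E μ := hIfp.mono_set Set.diff_subset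
    have hold := holder_subset μ hpq hf0 hEfin hfE hfpE
    have hpow0 : ∀ y : X, (0:ℝ) ≤ f y ^ p := fun y => Real.rpow_nonneg (hf0 y) p
    have h5 : ∫ y in E, f y ^ p ∂μ ≤ ∫ y in ball x s, f y ^ p ∂μ :=
      setIntegral_mono_set hIfp (Filter.Eventually.of_forall hpow0)
        (Set.diff_subset).eventuallyLE
    have hA0 : 0 ≤ A := by
      rw [hA, setAverage_eq]
      exact smul_nonneg (by positivity)
        (setIntegral_nonneg measurableSet_ball fun y _ => hpow0 y)
    have hI0 : 0 ≤ I := setIntegral_nonneg measurableSet_ball fun y _ => hf0 y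
    have hBint : ∫ y in ball x s, f y ^ p ∂μ = M * A := by
      rw [hA, setAverage_eq, smul_eq_mul, measureReal_def, ← hM, ← mul_assoc, mul_inv_cancel₀ hMpos.ne', one_mul]
    have havgf : ⨍ y in ball x s, f y ∂μ = M⁻¹ * I := by
      rw [setAverage_eq, smul_eq_mul, measureReal_def, ← hM]
    have havg0 : 0 ≤ ⨍ y in ball x s, f y ∂μ := by
      rw [havgf]; positivity
    have hRHs : A ^ (1/p) ≤ c'' * (M⁻¹ * I) := by
      rw [← havgf]
      exact (hRH x s hs).2.trans (mul_le_mul_of_nonneg_right (le_max_left _ _) havg0)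
    -- annular decay bound on the measure of the annulus
    have hμE : (μ E).toReal ≤ c_a * δ ^ α * M := by
      calc (μ E).toReal ≤ (ENNReal.ofReal (c_a * δ ^ α) * μ (ball x s)).toReal :=
            ENNReal.toReal_mono (ENNReal.mul_ne_top ENNReal.ofReal_ne_top hμB)
              (had x s δ hs hδ0 hδ1)
        _ = c_a * δ ^ α * M := by
            rw [ENNReal.toReal_mul, ENNReal.toReal_ofReal (by positivity)]
    have h7 : (μ E).toReal ^ (1/q) ≤ (c_a * δ ^ α) ^ (1/q) * M ^ (1/q) := by
      rw [← Real.mul_rpow (by positivity) hMpos.le]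
      exact Real.rpow_le_rpow ENNReal.toReal_nonneg hμE (by positivity)
    have h8 : ∫ y in E, f y ∂μ ≤ (M * A) ^ (1/p) * ((c_a * δ ^ α) ^ (1/q) * M ^ (1/q)) := by
      refine hold.trans (mul_le_mul ?_ h7
        (Real.rpow_nonneg ENNReal.toReal_nonneg _) (by positivity))
      rw [← hBint]
      exact Real.rpow_le_rpow
        (setIntegral_nonneg (measurableSet_ball.diff measurableSet_ball) fun y _ => hpow0 y)
        h5 (by positivity)
    have h9 : (M * A) ^ (1/p) ≤ M ^ (1/p) * (c'' * (M⁻¹ * I)) := by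
      rw [Real.mul_rpow hMpos.le hA0]
      exact mul_le_mul_of_nonneg_left hRHs (Real.rpow_nonneg hMpos.le _)
    have hMM : M ^ (1/p) * M ^ (1/q) * M⁻¹ = 1 := by
      rw [← Real.rpow_add hMpos]
      rw [show 1/p + 1/q = 1 by
        rw [one_div, one_div]; exact hpq.inv_add_inv_eq_one]
      rw [Real.rpow_one, mul_inv_cancel₀ hMpos.ne']
    have h10 := h8.trans (mul_le_mul_of_nonneg_right h9 (by positivity))
    have heq : M ^ (1/p) * (c'' * (M⁻¹ * I)) * ((c_a * δ ^ α) ^ (1/q) * M ^ (1/q))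
        = c'' * (c_a * δ ^ α) ^ (1/q) * I * (M ^ (1/p) * M ^ (1/q) * M⁻¹) := by ring
    rw [heq, hMM, mul_one] at h10
    have h11 : ∫ y in E, f y ∂μ ≤ (1/2) * I :=
      h10.trans (mul_le_mul_of_nonneg_right hkey hI0)
    rw [hIE] at h11
    linarith
  -- iterate the step
  have chain : ∀ n : ℕ,
      ∫ y in ball x (2*r), f y ∂μ ≤ 2^n * ∫ y in ball x ((1-δ)^n * (2*r)), f y ∂μ := by
    intro n
    induction n with
    | zero => simp
    | succ n ih =>
      have hsn : 0 < (1-δ)^n * (2*r) := mul_pos (pow_pos h1δ0 n) (by linarith)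
      calc ∫ y in ball x (2*r), f y ∂μ
          ≤ 2^n * ∫ y in ball x ((1-δ)^n * (2*r)), f y ∂μ := ih
        _ ≤ 2^n * (2 * ∫ y in ball x ((1-δ) * ((1-δ)^n * (2*r))), f y ∂μ) :=
            mul_le_mul_of_nonneg_left (step _ hsn) (by positivity)
        _ = 2^(n+1) * ∫ y in ball x ((1-δ)^(n+1) * (2*r)), f y ∂μ := by
            rw [show (1-δ) * ((1-δ)^n * (2*r)) = (1-δ)^(n+1) * (2*r) by ring]
            ring
  calc ∫ y in ball x (2*r), f y ∂μ
      ≤ 2^N * ∫ y in ball x ((1-δ)^N * (2*r)), f y ∂μ := chain N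
    _ ≤ 2^N * ∫ y in ball x r, f y ∂μ := by
        refine mul_le_mul_of_nonneg_left (setIntegral_mono_set (hfInt x r hr)
          (Filter.Eventually.of_forall hf0) ?_) (by positivity)
        exact (ball_subset_ball (by nlinarith)).eventuallyLE
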